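/- Let G be a 2-connected graph and u, v two vertices of G such that G − u − v is the union of two disjoint nonempty graphs G₁ and G₂. If every vertex w of G other than u and v has degree d(w) ≥ δ, then G contains a uv-path of order at least δ + 1 that has no vertices in common with G₁. -/

import Mathlib

open SimpleGraph

/-- `G` is 2-connected: it has at least 3 vertices, is connected, and remains connected
after deleting any single vertex. -/
def TwoConnected {V : Type*} [Fintype V] (G : SimpleGraph V) : Prop :=
  3 ≤ Fintype.card V ∧ G.Connected ∧
    ∀ v : V, ((⊤ : G.Subgraph).deleteVerts {v}).coe.Connected


namespace PAC
variable {V : Type*} {G : SimpleGraph V}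

/-- Exit/truncation lemma: a walk starting in a "closed" set `P` and ending outside it
must exit through the frontier `F`, and the portion up to the exit stays in `P`. -/
lemma exit_lemma {P F : Set V} {t : V} :
    ∀ {a : V} (w : G.Walk a t), a ∈ P → t ∉ P →
    (∀ p ∈ P, ∀ y, G.Adj p y → y ∈ P ∪ F) →
    ∃ f, f ∈ F ∧ f ∉ P ∧ (∃ y ∈ P, G.Adj y f) ∧ ∃ w' : G.Walk a f,
      (∀ z ∈ w'.support, z = f ∨ z ∈ P) ∧ (∀ z ∈ w'.support, z ∈ w.support) := by
  intro a w
  induction w with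
  | nil => intro ha ht _; exact absurd ha ht
  | @cons a b t h p ih =>
    intro ha ht hcl
    by_cases hb : b ∈ P
    · obtain ⟨f, hfF, hfP, hyedge, w', hw1, hw2⟩ := ih hb ht hcl
      refine ⟨f, hfF, hfP, hyedge, Walk.cons h w', ?_, ?_⟩
      · intro z hz
        rw [Walk.support_cons] at hz
        rcases List.mem_cons.1 hz with rfl | hz
        · exact Or.inr ha
        · exact hw1 z hz
      · intro z hz
        rw [Walk.support_cons] at hz
        rcases List.mem_cons.1 hz with rfl | hz
        · exact Walk.start_mem_support _
        · rw [Walk.support_cons]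
          exact List.mem_cons_of_mem _ (hw2 z hz)
    · have hbf : b ∈ P ∪ F := hcl a ha b h
      refine ⟨b, hbf.resolve_left hb, hb, ⟨a, ha, h⟩, Walk.cons h Walk.nil, ?_, ?_⟩
      · intro z hz
        simp only [Walk.support_cons, Walk.support_nil, List.mem_cons, List.mem_singleton,
          List.not_mem_nil, or_false] at hz
        rcases hz with hz | hz
        · rw [hz]; exact Or.inr ha
        · rw [hz]; exact Or.inl rfl
      · intro z hz
        simp only [Walk.support_cons, Walk.support_nil, List.mem_cons, List.mem_singleton,
          List.not_mem_nil, or_false] at hz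
        rw [Walk.support_cons]
        rcases hz with hz | hz
        · rw [hz]; exact List.mem_cons_self
        · rw [hz]; exact List.mem_cons_of_mem _ (Walk.start_mem_support _)
variable {W : Type*} {H : SimpleGraph W}

/-- Lift a walk avoiding `x` to the subgraph obtained by deleting `x`. -/
lemma reach_delete_of_walk {x : W} {b : W} :
    ∀ {a : W} (w : H.Walk a b) (_ : x ∉ w.support) (ha : a ∈ ((⊤ : H.Subgraph).deleteVerts {x}).verts)
      (hb : b ∈ ((⊤ : H.Subgraph).deleteVerts {x}).verts),
      ((⊤ : H.Subgraph).deleteVerts {x}).coe.Reachable ⟨a, ha⟩ ⟨b, hb⟩ := by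
  intro a w
  induction w with
  | nil =>
    intro _ ha hb
    exact Reachable.refl _
  | @cons a c b h p ih =>
    intro hx ha hb
    rw [Walk.support_cons] at hx
    have hxa : x ≠ a := fun h' => hx (h' ▸ List.mem_cons_self)
    have hxp : x ∉ p.support := fun h' => hx (List.mem_cons_of_mem _ h')
    have hc : c ∈ ((⊤ : H.Subgraph).deleteVerts {x}).verts := by
      simp only [Subgraph.deleteVerts_verts, Subgraph.verts_top, Set.mem_diff, Set.mem_univ,
        Set.mem_singleton_iff, true_and]
      intro h'; exact hxp (h' ▸ Walk.start_mem_support _)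
    have hadj : ((⊤ : H.Subgraph).deleteVerts {x}).coe.Adj ⟨a, ha⟩ ⟨c, hc⟩ := by
      simp only [Subgraph.coe_adj, Subgraph.deleteVerts_adj, Subgraph.verts_top, Set.mem_univ,
        Set.mem_singleton_iff, Subgraph.top_adj, true_and]
      exact ⟨fun h' => hxa h'.symm, by
        intro h'; exact hxp (h' ▸ Walk.start_mem_support _), h⟩
    exact (hadj.reachable).trans (ih hxp hc hb)

/-- Characterization of connectivity after deleting one vertex in terms of walks. -/
lemma connected_delete_iff (H : SimpleGraph W) (x : W) :
    ((⊤ : H.Subgraph).deleteVerts {x}).coe.Connected ↔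
      ((∃ y, y ≠ x) ∧ ∀ a b, a ≠ x → b ≠ x → ∃ w : H.Walk a b, x ∉ w.support) := by
  constructor
  · intro hc
    obtain ⟨⟨y, hy⟩⟩ := hc.nonempty
    simp only [Subgraph.deleteVerts_verts, Subgraph.verts_top, Set.mem_diff, Set.mem_univ,
      Set.mem_singleton_iff, true_and] at hy
    refine ⟨⟨y, hy⟩, fun a b ha hb => ?_⟩
    have hav : a ∈ ((⊤ : H.Subgraph).deleteVerts {x}).verts := by
      simp [Subgraph.deleteVerts_verts, ha]
    have hbv : b ∈ ((⊤ : H.Subgraph).deleteVerts {x}).verts := by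
      simp [Subgraph.deleteVerts_verts, hb]
    obtain ⟨w⟩ := hc.preconnected ⟨a, hav⟩ ⟨b, hbv⟩
    refine ⟨w.map (Subgraph.hom _), ?_⟩
    intro hmem
    replace hmem : x ∈ (w.map (Subgraph.hom _)).support := hmem
    rw [Walk.support_map] at hmem
    obtain ⟨⟨z, hz⟩, _, hz2⟩ := List.mem_map.1 hmem
    simp only [Subgraph.deleteVerts_verts, Subgraph.verts_top, Set.mem_diff, Set.mem_univ,
      Set.mem_singleton_iff, true_and] at hz
    exact hz (by exact hz2)
  · rintro ⟨⟨y, hy⟩, hwalks⟩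
    have hne : Nonempty ((⊤ : H.Subgraph).deleteVerts {x}).verts :=
      ⟨⟨y, by simp [Subgraph.deleteVerts_verts, hy]⟩⟩
    rw [connected_iff]
    refine ⟨?_, hne⟩
    rintro ⟨a, ha⟩ ⟨b, hb⟩
    have ha' : a ≠ x := by
      simp only [Subgraph.deleteVerts_verts, Subgraph.verts_top, Set.mem_diff, Set.mem_univ,
        Set.mem_singleton_iff, true_and] at ha
      exact ha
    have hb' : b ≠ x := by
      simp only [Subgraph.deleteVerts_verts, Subgraph.verts_top, Set.mem_diff, Set.mem_univ,
        Set.mem_singleton_iff, true_and] at hb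
      exact hb
    obtain ⟨w, hw⟩ := hwalks a b ha' hb'
    exact reach_delete_of_walk w hw ha hb
variable {V : Type*} {G : SimpleGraph V}

/-- Lift a walk of `G` whose support lies in `s` to any graph on `↥s` with more edges. -/
lemma walk_lift {s : Set V} {H : SimpleGraph ↥s}
    (hsub : ∀ x y : ↥s, G.Adj ↑x ↑y → H.Adj x y) {b : V} :
    ∀ {a : V} (w : G.Walk a b) (_ : ∀ z ∈ w.support, z ∈ s) (ha : a ∈ s) (hb : b ∈ s),
      ∃ w' : H.Walk ⟨a, ha⟩ ⟨b, hb⟩, w'.support.map Subtype.val = w.support := by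
  intro a w
  induction w with
  | nil =>
    intro _ ha hb
    exact ⟨Walk.nil, by simp⟩
  | @cons a c b h p ih =>
    intro hw ha hb
    have hc : c ∈ s := hw c (by rw [Walk.support_cons]; exact List.mem_cons_of_mem _ (Walk.start_mem_support _))
    obtain ⟨w', hw'⟩ := ih (fun z hz => hw z (by rw [Walk.support_cons]; exact List.mem_cons_of_mem _ hz)) hc hb
    refine ⟨Walk.cons (hsub ⟨a, ha⟩ ⟨c, hc⟩ h) w', ?_⟩
    rw [Walk.support_cons, Walk.support_cons, List.map_cons, hw']

/-- Project a walk in a graph on a subtype down to `G`, given that all its edges are `G`-edges. -/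
lemma walk_down_cond {s : Set V} {H : SimpleGraph ↥s} {b : ↥s} :
    ∀ {a : ↥s} (w : H.Walk a b)
      (_ : ∀ x y : ↥s, s(x, y) ∈ w.edges → G.Adj ↑x ↑y),
      ∃ w' : G.Walk ↑a ↑b, w'.length = w.length ∧ w'.support = w.support.map Subtype.val := by
  intro a w
  induction w with
  | nil => intro _; exact ⟨Walk.nil, by simp, by simp⟩
  | @cons a c b h p ih =>
    intro hE
    have hac : G.Adj ↑a ↑c := hE a c (by rw [Walk.edges_cons]; exact List.mem_cons_self)
    obtain ⟨w', hl, hs⟩ := ih (fun x y hxy => hE x y (by rw [Walk.edges_cons]; exact List.mem_cons_of_mem _ hxy))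
    refine ⟨Walk.cons hac w', ?_, ?_⟩
    · rw [Walk.length_cons, Walk.length_cons, hl]
    · rw [Walk.support_cons, Walk.support_cons, List.map_cons, hs]

/-- Project a walk via a subgraph-style homomorphism (subtype inclusion). -/
lemma walk_down {s : Set V} {H : SimpleGraph ↥s}
    (hsub : ∀ x y : ↥s, H.Adj x y → G.Adj ↑x ↑y) {a b : ↥s} (w : H.Walk a b) :
    ∃ w' : G.Walk ↑a ↑b, w'.length = w.length ∧ w'.support = w.support.map Subtype.val :=
  walk_down_cond w (fun x y hxy => hsub x y ((H.mem_edgeSet).1 (w.edges_subset_edgeSet hxy)))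

variable {W : Type*} {H : SimpleGraph W}






/-- A "pendant piece": `K` is a connected piece attached to the rest of the graph
only through `c` and `u`, and avoiding `v`. -/
structure Pack (H : SimpleGraph W) (u v c : W) (K : Set W) : Prop where
  cu : c ≠ u
  uK : u ∉ K
  cK : c ∉ K
  vK : v ∉ K
  ne : K.Nonempty
  closure : ∀ k ∈ K, ∀ y, H.Adj k y → y ∈ K ∨ y = c ∨ y = u
  conn : ∀ k ∈ K, ∀ k' ∈ K, ∃ w : H.Walk k k', ∀ z ∈ w.support, z ∈ K

variable {u v c : W} {K : Set W}

lemma Pack.closure' (P : Pack H u v c K) :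
    ∀ p ∈ K, ∀ y, H.Adj p y → y ∈ K ∪ {c, u} := fun p hp y hy => by
  rcases P.closure p hp y hy with h | h | h
  · exact Or.inl h
  · exact Or.inr (by simp [h])
  · exact Or.inr (by simp [h])

/-- `c` has a neighbour inside `K`. -/
lemma Pack.cadj (P : Pack H u v c K) (huv : u ≠ v)
    (hdel : ∀ x a b, a ≠ x → b ≠ x → ∃ w : H.Walk a b, x ∉ w.support) :
    ∃ k ∈ K, H.Adj c k := by
  obtain ⟨k₀, hk₀⟩ := P.ne
  have hk₀u : k₀ ≠ u := fun h => P.uK (h ▸ hk₀)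
  obtain ⟨w, hw⟩ := hdel u k₀ v hk₀u huv.symm
  obtain ⟨f, hfF, hfP, ⟨y, hyK, hyadj⟩, w', _, hw2⟩ :=
    exit_lemma (P := K) (F := {c, u}) w hk₀ P.vK P.closure'
  have hfu : f ≠ u := fun h => hw (h ▸ hw2 f (Walk.end_mem_support w'))
  have hfc : f = c := by
    rcases hfF with h | h
    · exact h
    · exact absurd h hfu
  exact ⟨y, hyK, hfc ▸ hyadj.symm⟩

/-- `u` has a neighbour inside `K`. -/
lemma Pack.uadj (P : Pack H u v c K)
    (hdel : ∀ x a b, a ≠ x → b ≠ x → ∃ w : H.Walk a b, x ∉ w.support) :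
    ∃ k ∈ K, H.Adj u k := by
  obtain ⟨k₀, hk₀⟩ := P.ne
  have hk₀c : k₀ ≠ c := fun h => P.cK (h ▸ hk₀)
  obtain ⟨w, hw⟩ := hdel c k₀ u hk₀c P.cu.symm
  obtain ⟨f, hfF, hfP, ⟨y, hyK, hyadj⟩, w', _, hw2⟩ :=
    exit_lemma (P := K) (F := {c, u}) w hk₀ P.uK P.closure'
  have hfc : f ≠ c := fun h => hw (h ▸ hw2 f (Walk.end_mem_support w'))
  have hfu : f = u := by
    rcases hfF with h | h
    · exact absurd h hfc
    · exact h
  exact ⟨y, hyK, hfu ▸ hyadj.symm⟩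

/-- There is a walk from `c` to `v` avoiding `K` and `u`. -/
lemma Pack.toV (P : Pack H u v c K) (huv : u ≠ v)
    (hdel : ∀ x a b, a ≠ x → b ≠ x → ∃ w : H.Walk a b, x ∉ w.support) :
    ∃ w : H.Walk c v, ∀ t ∈ w.support, t ∉ K ∧ t ≠ u := by
  by_cases hvc : v = c
  · subst hvc
    exact ⟨Walk.nil, by
      intro t ht
      simp only [Walk.support_nil, List.mem_singleton] at ht
      subst ht
      exact ⟨P.vK, P.cu⟩⟩
  · obtain ⟨w, hw⟩ := hdel u v c huv.symm P.cu
    obtain ⟨f, hfF, hfP, _, w', hw1, hw2⟩ :=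
      exit_lemma (P := {z | z ∉ K ∧ z ≠ c ∧ z ≠ u}) (F := {c, u}) w
        ⟨P.vK, hvc, huv.symm⟩ (by simp)
        (fun p hp y hy => by
          by_cases hyK : y ∈ K
          · exfalso
            rcases P.closure y hyK p hy.symm with h | h | h
            · exact hp.1 h
            · exact hp.2.1 h
            · exact hp.2.2 h
          · by_cases hyc : y = c
            · exact Or.inr (by simp [hyc])
            · by_cases hyu : y = u
              · exact Or.inr (by simp [hyu])
              · exact Or.inl ⟨hyK, hyc, hyu⟩)
    have hfu : f ≠ u := fun h => hw (h ▸ hw2 f (Walk.end_mem_support w'))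
    have hfc : f = c := by
      rcases hfF with h | h
      · exact h
      · exact absurd h hfu
    subst hfc
    refine ⟨w'.reverse, ?_⟩
    intro t ht
    rw [Walk.support_reverse, List.mem_reverse] at ht
    rcases hw1 t ht with h | h
    · rw [h]; exact ⟨P.cK, P.cu⟩
    · exact ⟨h.1, h.2.2⟩

-- ReachSet

/-- Vertices reachable from `s` by a walk all of whose vertices satisfy `Q`. -/
def ReachSet (H : SimpleGraph W) (s : W) (Q : W → Prop) : Set W :=
  {z | ∃ w : H.Walk s z, ∀ y ∈ w.support, Q y}

variable {s : W} {Q : W → Prop}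

lemma ReachSet.self (hs : Q s) : s ∈ ReachSet H s Q :=
  ⟨Walk.nil, by simp [hs]⟩

lemma ReachSet.prop {z : W} (hz : z ∈ ReachSet H s Q) : Q z := by
  obtain ⟨w, hw⟩ := hz
  exact hw z (Walk.end_mem_support w)

lemma ReachSet.extend {z y : W} (hz : z ∈ ReachSet H s Q) (hadj : H.Adj z y) (hy : Q y) :
    y ∈ ReachSet H s Q := by
  obtain ⟨w, hw⟩ := hz
  refine ⟨w.concat hadj, ?_⟩
  intro t ht
  rw [Walk.support_concat, List.mem_append] at ht
  rcases ht with ht | ht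
  · exact hw t ht
  · simp only [List.mem_singleton] at ht; rw [ht]; exact hy

lemma ReachSet.strong {z : W} (hz : z ∈ ReachSet H s Q) :
    ∃ w : H.Walk s z, ∀ y ∈ w.support, y ∈ ReachSet H s Q := by
  classical
  obtain ⟨w, hw⟩ := hz
  refine ⟨w, fun y hy => ?_⟩
  refine ⟨w.takeUntil y hy, fun t ht => hw t (Walk.support_takeUntil_subset w hy ht)⟩

lemma ReachSet.conn {k k' : W} (hk : k ∈ ReachSet H s Q) (hk' : k' ∈ ReachSet H s Q) :
    ∃ w : H.Walk k k', ∀ z ∈ w.support, z ∈ ReachSet H s Q := by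
  obtain ⟨w1, hw1⟩ := ReachSet.strong hk
  obtain ⟨w2, hw2⟩ := ReachSet.strong hk'
  refine ⟨w1.reverse.append w2, ?_⟩
  intro z hz
  rw [Walk.support_append, List.mem_append] at hz
  rcases hz with hz | hz
  · rw [Walk.support_reverse, List.mem_reverse] at hz
    exact hw1 z hz
  · exact hw2 z (List.mem_of_mem_tail hz)

variable {u v : W}
def NoCut (H : SimpleGraph W) (c : W) (K : Set W) : Prop :=
  ∀ x a b : W, a ∈ K ∪ {c} → b ∈ K ∪ {c} → a ≠ x → b ≠ x →
    ∃ w : H.Walk a b, ∀ z ∈ w.support, z ∈ K ∪ {c} ∧ z ≠ x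



variable {u v : W}

lemma exists_third [Fintype W] (hcard : 3 ≤ Fintype.card W) (u v : W) :
    ∃ z : W, z ≠ u ∧ z ≠ v := by
  classical
  by_contra h
  push_neg at h
  have hsub : (Finset.univ : Finset W) ⊆ {u, v} := by
    intro z _
    by_cases hz : z = u
    · simp [hz]
    · simp [h z hz]
  have := Finset.card_le_card hsub
  have h2 : ({u, v} : Finset W).card ≤ 2 := Finset.card_insert_le _ _ |>.trans (by simp)
  rw [Finset.card_univ] at this
  omega

lemma exists_pack [Fintype W] (hcard : 3 ≤ Fintype.card W) (huv : u ≠ v)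
    (hdel : ∀ x a b : W, a ≠ x → b ≠ x → ∃ w : H.Walk a b, x ∉ w.support) :
    ∃ c K, Pack H u v c K ∧ NoCut H c K := by
  classical
  by_cases hcut : ∃ x : W, x ≠ u ∧ ∃ a b : W, a ≠ u ∧ a ≠ x ∧ b ≠ u ∧ b ≠ x ∧
      ¬ ∃ w : H.Walk a b, ∀ z ∈ w.support, z ≠ u ∧ z ≠ x
  · -- Case B : there is a cut
    obtain ⟨x₀, hx₀u, aW, bW, hau, hax, hbu, hbx, hno⟩ := hcut
    -- initial pack
    have hinit : ∃ c K, Pack H u v c K := by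
      set Q : W → Prop := fun z => z ≠ u ∧ z ≠ x₀ with hQ
      have hvnot : v ∉ ReachSet H aW Q ∨ v ∉ ReachSet H bW Q := by
        by_contra hb
        push_neg at hb
        obtain ⟨wa, hwa⟩ := hb.1
        obtain ⟨wb, hwb⟩ := hb.2
        refine hno ⟨wa.append wb.reverse, ?_⟩
        intro z hz
        rw [Walk.support_append, List.mem_append] at hz
        rcases hz with hz | hz
        · exact hwa z hz
        · refine hwb z ?_
          rw [Walk.support_reverse] at hz
          exact List.mem_reverse.1 (List.mem_of_mem_tail hz)
      have hstep : ∀ a₀ : W, a₀ ≠ u → a₀ ≠ x₀ → v ∉ ReachSet H a₀ Q →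
          ∃ c K, Pack H u v c K := by
        intro a₀ h1 h2 h3
        refine ⟨x₀, ReachSet H a₀ Q, ?_⟩
        refine ⟨hx₀u, fun h => (ReachSet.prop h).1 rfl, fun h => (ReachSet.prop h).2 rfl,
          h3, ⟨a₀, ReachSet.self ⟨h1, h2⟩⟩, ?_, fun k hk k' hk' => ReachSet.conn hk hk'⟩
        intro k hk y hadj
        by_cases hyu : y = u
        · exact Or.inr (Or.inr hyu)
        · by_cases hyx : y = x₀
          · exact Or.inr (Or.inl hyx)
          · exact Or.inl (ReachSet.extend hk hadj ⟨hyu, hyx⟩)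
      rcases hvnot with h | h
      · exact hstep aW hau hax h
      · exact hstep bW hbu hbx h
    -- take a minimal pack
    obtain ⟨c₀, K₀, hP₀⟩ := hinit
    have hSne : {m : ℕ | ∃ c K, Pack H u v c K ∧ K.ncard = m}.Nonempty :=
      ⟨K₀.ncard, c₀, K₀, hP₀, rfl⟩
    obtain ⟨c, K, P, hmin⟩ := Nat.sInf_mem hSne
    refine ⟨c, K, P, ?_⟩
    intro x a b ha hb hax hbx
    by_contra hno2
    have hcadj : ∃ k ∈ K, H.Adj c k := P.cadj huv hdel
    by_cases hxK : x ∈ K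
    · -- minimality argument
      set L : Set W := K ∪ {c} with hL
      set Q2 : W → Prop := fun z => z ∈ L ∧ z ≠ x with hQ2
      have hxu : x ≠ u := fun h => P.uK (h ▸ hxK)
      have hxc : x ≠ c := fun h => P.cK (h ▸ hxK)
      have hcL : c ∈ L := Or.inr rfl
      have hcnot : c ∉ ReachSet H a Q2 ∨ c ∉ ReachSet H b Q2 := by
        by_contra hcc
        push_neg at hcc
        obtain ⟨wa, hwa⟩ := hcc.1
        obtain ⟨wb, hwb⟩ := hcc.2
        refine hno2 ⟨wa.append wb.reverse, ?_⟩
        intro z hz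
        rw [Walk.support_append, List.mem_append] at hz
        rcases hz with hz | hz
        · exact hwa z hz
        · refine hwb z ?_
          rw [Walk.support_reverse] at hz
          exact List.mem_reverse.1 (List.mem_of_mem_tail hz)
      have hstep : ∀ a₀ : W, a₀ ∈ L → a₀ ≠ x → c ∉ ReachSet H a₀ Q2 → False := by
        intro a₀ h1 h2 h3
        set M : Set W := ReachSet H a₀ Q2 with hM
        have hMK : M ⊆ K \ {x} := by
          intro z hz
          have hzp := ReachSet.prop hz
          rcases hzp.1 with hzK | hzc
          · exact ⟨hzK, hzp.2⟩
          · exact absurd (hzc ▸ hz) h3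
        have hPM : Pack H u v x M := by
          refine ⟨hxu, ?_, fun h => (ReachSet.prop h).2 rfl, ?_,
            ⟨a₀, ReachSet.self ⟨h1, h2⟩⟩, ?_, fun k hk k' hk' => ReachSet.conn hk hk'⟩
          · intro h; exact P.uK (hMK h).1
          · intro h; exact P.vK (hMK h).1
          · intro k hk y hadj
            by_cases hyu : y = u
            · exact Or.inr (Or.inr hyu)
            · by_cases hyx : y = x
              · exact Or.inr (Or.inl hyx)
              · refine Or.inl (ReachSet.extend hk hadj ⟨?_, hyx⟩)
                have hkK : k ∈ K := (hMK hk).1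
                rcases P.closure k hkK y hadj with h | h | h
                · exact Or.inl h
                · exact Or.inr h
                · exact absurd h hyu
        have h5 : (K \ {x}).ncard + 1 = K.ncard :=
          Set.ncard_diff_singleton_add_one hxK (Set.toFinite K)
        have h6 : M.ncard ≤ (K \ {x}).ncard := Set.ncard_le_ncard hMK (Set.toFinite _)
        have h7 : sInf {m : ℕ | ∃ c K, Pack H u v c K ∧ K.ncard = m} ≤ M.ncard :=
          Nat.sInf_le ⟨x, M, hPM, rfl⟩
        omega
      have haL : a ∈ L := ha
      have hbL : b ∈ L := hb
      rcases hcnot with h | h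
      · exact hstep a haL hax h
      · exact hstep b hbL hbx h
    · -- x outside K: build the walk directly
      have hwalkL : ∀ p, p ∈ K ∪ {c} → ∃ w : H.Walk c p, ∀ z ∈ w.support, z ∈ K ∪ {c} := by
        intro p hp
        rcases hp with hpK | hpc
        · obtain ⟨k₀, hk₀, hck₀⟩ := hcadj
          obtain ⟨w, hw⟩ := P.conn k₀ hk₀ p hpK
          refine ⟨Walk.cons hck₀ w, ?_⟩
          intro z hz
          rw [Walk.support_cons] at hz
          rcases List.mem_cons.1 hz with hz | hz
          · exact Or.inr hz
          · exact Or.inl (hw z hz)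
        · rw [hpc]
          exact ⟨Walk.nil, by simp⟩
      have hxL : x ∉ K ∪ {c} := by
        by_cases hxc : x = c
        · -- x = c : connect within K
          exfalso
          have haK : a ∈ K := by
            rcases ha with h | h
            · exact h
            · exact absurd (h.trans hxc.symm) hax
          have hbK : b ∈ K := by
            rcases hb with h | h
            · exact h
            · exact absurd (h.trans hxc.symm) hbx
          obtain ⟨w, hw⟩ := P.conn a haK b hbK
          exact hno2 ⟨w, fun z hz => ⟨Or.inl (hw z hz),
            fun h => P.cK (hxc ▸ h ▸ hw z hz)⟩⟩
        · intro h
          rcases h with h | h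
          · exact hxK h
          · exact hxc h
      exfalso
      obtain ⟨wa, hwa⟩ := hwalkL a ha
      obtain ⟨wb, hwb⟩ := hwalkL b hb
      refine hno2 ⟨wa.reverse.append wb, ?_⟩
      intro z hz
      rw [Walk.support_append, List.mem_append] at hz
      have hzL : z ∈ K ∪ {c} := by
        rcases hz with hz | hz
        · rw [Walk.support_reverse, List.mem_reverse] at hz
          exact hwa z hz
        · exact hwb z (List.mem_of_mem_tail hz)
      exact ⟨hzL, fun h => hxL (h ▸ hzL)⟩
  · -- Case A : no cut
    push_neg at hcut
    refine ⟨v, {z | z ≠ u ∧ z ≠ v}, ?_, ?_⟩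
    · refine ⟨huv.symm, by simp, by simp, by simp, exists_third hcard u v, ?_, ?_⟩
      · intro k hk y _
        by_cases hyu : y = u
        · exact Or.inr (Or.inr hyu)
        · by_cases hyv : y = v
          · exact Or.inr (Or.inl hyv)
          · exact Or.inl ⟨hyu, hyv⟩
      · intro k hk k' hk'
        obtain ⟨w, hw⟩ := hcut v huv.symm k k' hk.1 hk.2 hk'.1 hk'.2
        exact ⟨w, fun z hz => hw z hz⟩
    · intro x a b ha hb hax hbx
      have hKv : ∀ z : W, z ∈ ({z | z ≠ u ∧ z ≠ v} : Set W) ∪ {v} ↔ z ≠ u := by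
        intro z
        constructor
        · rintro (h | h)
          · exact h.1
          · rw [h]; exact huv.symm
        · intro h
          by_cases hzv : z = v
          · exact Or.inr hzv
          · exact Or.inl ⟨h, hzv⟩
      have hau' : a ≠ u := (hKv a).1 ha
      have hbu' : b ≠ u := (hKv b).1 hb
      by_cases hxu : x = u
      · obtain ⟨w, hw⟩ := hdel u a b hau' hbu'
        refine ⟨w, fun z hz => ⟨(hKv z).2 (fun h => hw (h ▸ hz)), fun h => hw (hxu ▸ h ▸ hz)⟩⟩
      · obtain ⟨w, hw⟩ := hcut x hxu a b hau' hax hbu' hbx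
        exact ⟨w, fun z hz => ⟨(hKv z).2 (hw z hz).1, (hw z hz).2⟩⟩


universe uu

/-- Main induction: in a 2-connected graph where every vertex other than `u, v` has
degree at least `δ`, there is a `u`-`v` path of length at least `δ`. -/
theorem long_path (n : ℕ) : ∀ (W : Type uu) [Fintype W] (H : SimpleGraph W),
    Fintype.card W = n → 3 ≤ Fintype.card W → H.Connected →
    (∀ x a b : W, a ≠ x → b ≠ x → ∃ w : H.Walk a b, x ∉ w.support) →
    ∀ u v : W, u ≠ v → ∀ δ : ℕ,
    (∀ w : W, w ≠ u → w ≠ v → δ ≤ (H.neighborSet w).ncard) →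
    ∃ P : H.Walk u v, P.IsPath ∧ δ ≤ P.length := by
  induction n using Nat.strong_induction_on with
  | _ n IH =>
  intro W instW H hn h3 hconn hdel u v huv δ hdeg
  classical
  by_cases hδ2 : δ ≤ 1
  · obtain ⟨w⟩ := hconn.preconnected u v
    refine ⟨(w.toPath : H.Walk u v), w.toPath.isPath, ?_⟩
    have h1 : 1 ≤ (w.toPath : H.Walk u v).length :=
      Nat.one_le_iff_ne_zero.2 (fun h0 => huv (Walk.eq_of_length_eq_zero h0))
    omega
  · push_neg at hδ2
    obtain ⟨c, K, P, hNC⟩ := exists_pack h3 huv hdel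
    obtain ⟨z, hzK, hzadj⟩ := P.uadj hdel
    obtain ⟨R₀, hR₀⟩ := P.toV huv hdel
    set R : H.Walk c v := (R₀.toPath : H.Walk c v) with hRdef
    have hRpath : R.IsPath := R₀.toPath.isPath
    have hR : ∀ t ∈ R.support, t ∉ K ∧ t ≠ u := fun t ht =>
      hR₀ t (Walk.support_toPath_subset R₀ ht)
    have hzc : z ≠ c := fun h => P.cK (h ▸ hzK)
    have hzu : z ≠ u := fun h => P.uK (h ▸ hzK)
    have hzv : z ≠ v := fun h => P.vK (h ▸ hzK)
    -- main step : a path from z to c inside K ∪ {c} of length ≥ δ - 1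
    have hW2 : ∃ w2 : H.Walk z c, w2.IsPath ∧ (δ - 1) ≤ w2.length ∧
        ∀ t ∈ w2.support, t ∈ K ∪ {c} := by
      by_cases hK1 : ∀ k ∈ K, k = z
      · -- K = {z}
        obtain ⟨k₀, hk₀K, hck₀⟩ := P.cadj huv hdel
        have hk₀z : k₀ = z := hK1 k₀ hk₀K
        have hδ2' : δ ≤ 2 := by
          have hsub : H.neighborSet z ⊆ {c, u} := by
            intro y hy
            rcases P.closure z hzK y hy with h | h | h
            · exact absurd (H.ne_of_adj hy) (by rw [hK1 y h]; simp)
            · simp [h]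
            · simp [h]
          have h1 : (H.neighborSet z).ncard ≤ ({c, u} : Set W).ncard :=
            Set.ncard_le_ncard hsub (Set.toFinite _)
          have h2 : ({c, u} : Set W).ncard ≤ 2 := by
            apply le_trans (Set.ncard_insert_le _ _)
            simp
          have := hdeg z hzu hzv
          omega
        refine ⟨Walk.cons (hk₀z ▸ hck₀).symm Walk.nil, ?_, ?_, ?_⟩
        · simp [Walk.cons_isPath_iff, hzc]
        · simp; omega
        · intro t ht
          simp only [Walk.support_cons, Walk.support_nil, List.mem_cons,
            List.mem_singleton, List.not_mem_nil, or_false] at ht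
          rcases ht with h | h
          · exact Or.inl (h ▸ hzK)
          · exact Or.inr (by simp [h])
      · -- |K| ≥ 2 : use the induction hypothesis on K ∪ {c}
        push_neg at hK1
        obtain ⟨k₁, hk₁K, hk₁z⟩ := hK1
        set L : Set W := K ∪ {c} with hLdef
        haveI instL : Fintype ↥L := (Set.toFinite L).fintype
        have huL : u ∉ L := by
          rintro (h | h)
          · exact P.uK h
          · exact P.cu h.symm
        have hvL : True := trivial
        have hzL : z ∈ L := Or.inl hzK
        have hcL : c ∈ L := Or.inr rfl
        have hk₁L : k₁ ∈ L := Or.inl hk₁K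
        have hlt : Fintype.card ↥L < n := by
          rw [← hn]
          apply Fintype.card_lt_of_injective_of_notMem Subtype.val Subtype.val_injective (b := u)
          rintro ⟨⟨y, hy⟩, h⟩
          exact huL (h ▸ hy)
        have h3L : 3 ≤ Fintype.card ↥L := by
          have hsub : ({z, k₁, c} : Finset W) ⊆ L.toFinset := by
            intro t ht
            simp only [Finset.mem_insert, Finset.mem_singleton] at ht
            rcases ht with h | h | h <;> rw [h] <;> simp only [Set.mem_toFinset]
            · exact hzL
            · exact hk₁L
            · exact hcL
          have hcard3 : ({z, k₁, c} : Finset W).card = 3 := by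
            rw [Finset.card_insert_of_notMem, Finset.card_insert_of_notMem,
              Finset.card_singleton]
            · simp only [Finset.mem_singleton]
              exact fun h => P.cK (h ▸ hk₁K)
            · simp only [Finset.mem_insert, Finset.mem_singleton]
              push_neg
              exact ⟨fun h => hk₁z h.symm, hzc⟩
          calc 3 = ({z, k₁, c} : Finset W).card := hcard3.symm
            _ ≤ L.toFinset.card := Finset.card_le_card hsub
            _ = Fintype.card ↥L := Set.toFinset_card L
        have hsubA : ∀ x y : ↥L, H.Adj ↑x ↑y → (induce L H).Adj x y := by
          intro x y h
          exact h
        have hsubB : ∀ x y : ↥L, (induce L H).Adj x y → H.Adj ↑x ↑y := by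
          intro x y h
          exact h
        -- connectivity of the induced graph
        have hreach : ∀ (a b : W) (ha : a ∈ L) (hb : b ∈ L) (x : W), a ≠ x → b ≠ x →
            ∃ w' : (induce L H).Walk ⟨a, ha⟩ ⟨b, hb⟩, ∀ t ∈ w'.support, (t : W) ≠ x := by
          intro a b ha hb x hax hbx
          obtain ⟨w, hw⟩ := hNC x a b ha hb hax hbx
          obtain ⟨w', hw'⟩ := walk_lift hsubA w (fun t ht => (hw t ht).1) ha hb
          refine ⟨w', ?_⟩
          intro t ht
          have : (t : W) ∈ w.support := by
            rw [← hw']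
            exact List.mem_map_of_mem ht
          exact (hw _ this).2
        have hconnL : (induce L H).Connected := by
          rw [connected_iff]
          refine ⟨?_, ⟨⟨z, hzL⟩⟩⟩
          rintro ⟨a, ha⟩ ⟨b, hb⟩
          have hau : a ≠ u := fun h => huL (h ▸ ha)
          have hbu : b ≠ u := fun h => huL (h ▸ hb)
          obtain ⟨w', _⟩ := hreach a b ha hb u hau hbu
          exact ⟨w'⟩
        have hdelL : ∀ (x a b : ↥L), a ≠ x → b ≠ x →
            ∃ w : (induce L H).Walk a b, x ∉ w.support := by
          rintro ⟨x, hx⟩ ⟨a, ha⟩ ⟨b, hb⟩ hax hbx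
          have hax' : a ≠ x := fun h => hax (Subtype.ext h)
          have hbx' : b ≠ x := fun h => hbx (Subtype.ext h)
          obtain ⟨w', hw'⟩ := hreach a b ha hb x hax' hbx'
          refine ⟨w', fun h => ?_⟩
          exact hw' _ h rfl
        -- degrees in the induced graph
        have hdegL : ∀ w' : ↥L, w' ≠ ⟨z, hzL⟩ → w' ≠ ⟨c, hcL⟩ →
            δ - 1 ≤ ((induce L H).neighborSet w').ncard := by
          rintro ⟨t, htL⟩ hne1 hne2
          have htc : t ≠ c := fun h => hne2 (Subtype.ext h)
          have htK : t ∈ K := by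
            rcases htL with h | h
            · exact h
            · exact absurd h htc
          have htu : t ≠ u := fun h => P.uK (h ▸ htK)
          have htv : t ≠ v := fun h => P.vK (h ▸ htK)
          have hd := hdeg t htu htv
          have himg : (H.neighborSet t \ {u}) ⊆
              Subtype.val '' ((induce L H).neighborSet ⟨t, htL⟩) := by
            intro y hy
            have hyL : y ∈ L := by
              rcases P.closure t htK y hy.1 with h | h | h
              · exact Or.inl h
              · exact Or.inr h
              · exact absurd h hy.2
            exact ⟨⟨y, hyL⟩, hy.1, rfl⟩
          have h1 : (H.neighborSet t \ {u}).ncard ≤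
              ((induce L H).neighborSet ⟨t, htL⟩).ncard := by
            calc (H.neighborSet t \ {u}).ncard
                ≤ (Subtype.val '' ((induce L H).neighborSet ⟨t, htL⟩)).ncard :=
                  Set.ncard_le_ncard himg (Set.toFinite _)
              _ = ((induce L H).neighborSet ⟨t, htL⟩).ncard :=
                  Set.ncard_image_of_injective _ Subtype.val_injective
          have h2 : (H.neighborSet t).ncard ≤ (H.neighborSet t \ {u}).ncard + 1 := by
            calc (H.neighborSet t).ncard
                ≤ ((H.neighborSet t \ {u}) ∪ {u}).ncard :=
                  Set.ncard_le_ncard (fun y hy => by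
                    by_cases h : y = u
                    · exact Or.inr h
                    · exact Or.inl ⟨hy, h⟩) (Set.Finite.union (Set.toFinite _) (Set.toFinite _))
              _ ≤ (H.neighborSet t \ {u}).ncard + ({u} : Set W).ncard := Set.ncard_union_le _ _
              _ = (H.neighborSet t \ {u}).ncard + 1 := by rw [Set.ncard_singleton]
          omega
        have hzc' : (⟨z, hzL⟩ : ↥L) ≠ ⟨c, hcL⟩ := fun h => hzc (congrArg Subtype.val h)
        obtain ⟨PL, hPLpath, hPLlen⟩ := IH (Fintype.card ↥L) hlt ↥L (induce L H) rfl h3L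
          hconnL hdelL ⟨z, hzL⟩ ⟨c, hcL⟩ hzc' (δ - 1) hdegL
        obtain ⟨w2, hw2len, hw2sup⟩ := walk_down hsubB PL
        refine ⟨w2, ?_, ?_, ?_⟩
        · rw [Walk.isPath_def, hw2sup]
          exact hPLpath.support_nodup.map Subtype.val_injective
        · omega
        · intro t ht
          rw [hw2sup] at ht
          obtain ⟨⟨t', ht'⟩, _, rfl⟩ := List.mem_map.1 ht
          exact ht'
    -- assemble the final path
    obtain ⟨w2, hw2p, hw2l, hw2s⟩ := hW2
    have happ : (w2.append R).IsPath := by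
      rw [Walk.isPath_def, Walk.support_append]
      refine List.Nodup.append hw2p.support_nodup
        (hRpath.support_nodup.sublist (List.tail_sublist _)) ?_
      intro t h1 h2
      have h2' : t ∈ R.support := List.mem_of_mem_tail h2
      rcases hw2s t h1 with h | h
      · exact (hR t h2').1 h
      · rw [Set.mem_singleton_iff] at h
        have hnd := hRpath.support_nodup
        rw [R.support_eq_cons] at hnd
        exact (List.nodup_cons.1 hnd).1 (h ▸ h2)
    have hfinal : (Walk.cons hzadj (w2.append R)).IsPath := by
      rw [Walk.cons_isPath_iff]
      refine ⟨happ, ?_⟩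
      rw [Walk.support_append, List.mem_append]
      rintro (h | h)
      · rcases hw2s u h with h' | h'
        · exact P.uK h'
        · exact P.cu (Set.mem_singleton_iff.1 h').symm
      · exact (hR u (List.mem_of_mem_tail h)).2 rfl
    refine ⟨Walk.cons hzadj (w2.append R), hfinal, ?_⟩
    rw [Walk.length_cons, Walk.length_append]
    omega

/-- In a path from `a` to `b`, if the edge `s(a,b)` occurs, the path has length 1. -/
lemma path_edge_endpoints {W : Type*} {H : SimpleGraph W} {a b : W} (p : H.Walk a b)
    (hp : p.IsPath) (he : s(a, b) ∈ p.edges) : p.length = 1 := by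
  cases p with
  | nil => simp at he
  | @cons _ c _ h q =>
    rw [Walk.edges_cons, List.mem_cons] at he
    rcases he with he | he
    · rcases Sym2.eq_iff.1 he with ⟨-, rfl⟩ | ⟨h1, h2⟩
      · have := (Walk.cons_isPath_iff h q).1 hp
        rw [Walk.isPath_iff_eq_nil] at this
        · rw [this.1]; simp
      · exfalso; rw [← h1] at h; exact H.loopless.irrefl a h
    · exact absurd (Walk.fst_mem_support_of_mem_edges q he)
        ((Walk.cons_isPath_iff h q).1 hp).2


end PAC

open PAC

/-- Let `G` be a 2-connected graph and `u, v` two vertices such that `G − u − v` is the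
union of two disjoint nonempty graphs `G₁` (on vertex set `A`) and `G₂` (on vertex set `B`),
i.e. `A` and `B` are disjoint nonempty sets covering all vertices except `u, v`, with no
edge of `G` between them. If every vertex `w ≠ u, v` has degree at least `δ`, then `G`
contains a `uv`-path of order at least `δ + 1` having no vertex in common with `G₁`. -/
theorem path_avoiding_component {V : Type*} [Fintype V] (G : SimpleGraph V)
    [DecidableRel G.Adj] (hG : TwoConnected G) (u v : V) (δ : ℕ)
    (A B : Set V) (hA : A.Nonempty) (hB : B.Nonempty)
    (hdisj : Disjoint A B) (hcover : A ∪ B = ({u, v} : Set V)ᶜ)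
    (hnoedge : ∀ a ∈ A, ∀ b ∈ B, ¬ G.Adj a b)
    (hdeg : ∀ w : V, w ≠ u → w ≠ v → δ ≤ G.degree w) :
    ∃ P : G.Walk u v, P.IsPath ∧ δ + 1 ≤ P.length + 1 ∧ ∀ a ∈ A, a ∉ P.support := by
  classical
  obtain ⟨h3, hconn, hdelv⟩ := hG
  have hGd : ∀ x a b : V, a ≠ x → b ≠ x → ∃ w : G.Walk a b, x ∉ w.support :=
    fun x => ((connected_delete_iff G x).1 (hdelv x)).2
  obtain ⟨a₁, ha₁⟩ := hA
  obtain ⟨b₁, hb₁⟩ := hB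
  -- A and B avoid u and v
  have hAuv : ∀ a ∈ A, a ≠ u ∧ a ≠ v := by
    intro a ha
    have : a ∈ ({u, v} : Set V)ᶜ := hcover ▸ Or.inl ha
    simp only [Set.mem_compl_iff, Set.mem_insert_iff, Set.mem_singleton_iff] at this
    push_neg at this
    exact this
  have hBuv : ∀ b ∈ B, b ≠ u ∧ b ≠ v := by
    intro b hb
    have : b ∈ ({u, v} : Set V)ᶜ := hcover ▸ Or.inr hb
    simp only [Set.mem_compl_iff, Set.mem_insert_iff, Set.mem_singleton_iff] at this
    push_neg at this
    exact this
  -- closure of B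
  have hBcl : ∀ p ∈ B, ∀ y, G.Adj p y → y ∈ B ∪ {u, v} := by
    intro p hp y hadj
    by_cases hyu : y = u
    · exact Or.inr (by simp [hyu])
    · by_cases hyv : y = v
      · exact Or.inr (by simp [hyv])
      · have : y ∈ A ∪ B := by
          rw [hcover]
          simp only [Set.mem_compl_iff, Set.mem_insert_iff, Set.mem_singleton_iff]
          push_neg
          exact ⟨hyu, hyv⟩
        rcases this with hyA | hyB
        · exact absurd hadj.symm (hnoedge y hyA p hp)
        · exact Or.inl hyB
  have hAcl : ∀ p ∈ A, ∀ y, G.Adj p y → y ∈ A ∪ {u, v} := by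
    intro p hp y hadj
    by_cases hyu : y = u
    · exact Or.inr (by simp [hyu])
    · by_cases hyv : y = v
      · exact Or.inr (by simp [hyv])
      · have : y ∈ A ∪ B := by
          rw [hcover]
          simp only [Set.mem_compl_iff, Set.mem_insert_iff, Set.mem_singleton_iff]
          push_neg
          exact ⟨hyu, hyv⟩
        rcases this with hyA | hyB
        · exact Or.inl hyA
        · exact absurd hadj (hnoedge p hp y hyB)
  -- u ≠ v
  have huv : u ≠ v := by
    intro huveq
    obtain ⟨w, hw⟩ := hGd u a₁ b₁ (hAuv a₁ ha₁).1 (hBuv b₁ hb₁).1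
    obtain ⟨f, hfF, _, _, w', _, hw2⟩ :=
      exit_lemma (P := A) (F := {u, v}) w ha₁ (fun h => hdisj.le_bot ⟨h, hb₁⟩)
        hAcl
    have : f ∈ w.support := hw2 f (Walk.end_mem_support w')
    rcases hfF with h | h
    · exact hw (h ▸ this)
    · rw [Set.mem_singleton_iff] at h
      exact hw ((h.trans huveq.symm) ▸ this)
  -- walks from B vertices to u (avoiding v) and to v (avoiding u), staying in B
  have hwalku : ∀ b ∈ B, ∃ w : G.Walk b u, (∀ t ∈ w.support, t ∈ B ∪ {u}) ∧ v ∉ w.support := by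
    intro b hb
    obtain ⟨w, hw⟩ := hGd v b u (hBuv b hb).2 huv
    obtain ⟨f, hfF, hfB, _, w', hw1, hw2⟩ :=
      exit_lemma (P := B) (F := {u, v}) w hb (fun h => (hBuv u h).1 rfl) hBcl
    have hfnv : f ≠ v := fun h => hw (h ▸ hw2 f (Walk.end_mem_support w'))
    have hfu : f = u := by
      rcases hfF with h | h
      · exact h
      · exact absurd h hfnv
    subst hfu
    refine ⟨w', ?_, ?_⟩
    · intro t ht
      rcases hw1 t ht with h | h
      · exact Or.inr (by simp [h])
      · exact Or.inl h
    · intro hvmem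
      exact hw (hw2 v hvmem)
  have hwalkv : ∀ b ∈ B, ∃ w : G.Walk b v, (∀ t ∈ w.support, t ∈ B ∪ {v}) ∧ u ∉ w.support := by
    intro b hb
    obtain ⟨w, hw⟩ := hGd u b v (hBuv b hb).1 huv.symm
    obtain ⟨f, hfF, hfB, _, w', hw1, hw2⟩ :=
      exit_lemma (P := B) (F := {u, v}) w hb (fun h => (hBuv v h).2 rfl) hBcl
    have hfnu : f ≠ u := fun h => hw (h ▸ hw2 f (Walk.end_mem_support w'))
    have hfv : f = v := by
      rcases hfF with h | h
      · exact absurd h hfnu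
      · exact h
    subst hfv
    refine ⟨w', ?_, ?_⟩
    · intro t ht
      rcases hw1 t ht with h | h
      · exact Or.inr (by simp [h])
      · exact Or.inl h
    · intro humem
      exact hw (hw2 u humem)
  -- composition helpers
  have havoid2 : ∀ {W : Type _} {H : SimpleGraph W} {a b m x : W}
      (w1 : H.Walk a m) (w2 : H.Walk b m), x ∉ w1.support → x ∉ w2.support →
      ∃ w : H.Walk a b, x ∉ w.support := by
    intro W H a b m x w1 w2 h1 h2
    refine ⟨w1.append w2.reverse, ?_⟩
    rw [Walk.support_append, List.mem_append]
    rintro (h | h)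
    · exact h1 h
    · exact h2 (by
        have := List.mem_of_mem_tail h
        rw [Walk.support_reverse, List.mem_reverse] at this
        exact this)
  by_cases hδ : δ ≤ 1
  · -- short case : just produce some u-v path avoiding A
    obtain ⟨w1, hw1, hw1v⟩ := hwalku b₁ hb₁
    obtain ⟨w2, hw2, hw2u⟩ := hwalkv b₁ hb₁
    set w : G.Walk u v := w1.reverse.append w2 with hwdef
    have hwsup : ∀ t ∈ w.support, t ∈ B ∪ {u, v} := by
      intro t ht
      rw [hwdef, Walk.support_append, List.mem_append] at ht
      rcases ht with ht | ht
      · rw [Walk.support_reverse, List.mem_reverse] at ht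
        rcases hw1 t ht with h | h
        · exact Or.inl h
        · exact Or.inr (by simp at h; simp [h])
      · rcases hw2 t (List.mem_of_mem_tail ht) with h | h
        · exact Or.inl h
        · exact Or.inr (by simp at h; simp [h])
    refine ⟨w.toPath, w.toPath.isPath, ?_, ?_⟩
    · have h1 : 1 ≤ (w.toPath : G.Walk u v).length :=
        Nat.one_le_iff_ne_zero.2 (fun h0 => huv (Walk.eq_of_length_eq_zero h0))
      omega
    · intro a ha hmem
      have hta := hwsup a (Walk.support_toPath_subset w hmem)
      rcases hta with h | h
      · exact hdisj.le_bot ⟨ha, h⟩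
      · simp only [Set.mem_insert_iff, Set.mem_singleton_iff] at h
        rcases h with h | h
        · exact (hAuv a ha).1 h
        · exact (hAuv a ha).2 h
  · -- main case : δ ≥ 2
    push_neg at hδ
    set S : Set V := B ∪ {u, v} with hSdef
    have huS : u ∈ S := Or.inr (by simp)
    have hvS : v ∈ S := Or.inr (by simp)
    have hBS : ∀ b ∈ B, b ∈ S := fun b hb => Or.inl hb
    have hmemS : ∀ t ∈ S, t ∈ B ∨ t = u ∨ t = v := by
      intro t ht
      rcases ht with h | h
      · exact Or.inl h
      · simp only [Set.mem_insert_iff, Set.mem_singleton_iff] at h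
        exact Or.inr h
    set Hp : SimpleGraph ↥S :=
      { Adj := fun x y => G.Adj ↑x ↑y ∨ ((x : V) = u ∧ (y : V) = v) ∨ ((x : V) = v ∧ (y : V) = u)
        symm := by
          refine ⟨?_⟩; rintro x y (h | ⟨h1, h2⟩ | ⟨h1, h2⟩)
          · exact Or.inl h.symm
          · exact Or.inr (Or.inr ⟨h2, h1⟩)
          · exact Or.inr (Or.inl ⟨h2, h1⟩)
        loopless := by
          refine ⟨?_⟩; rintro x (h | ⟨h1, h2⟩ | ⟨h1, h2⟩)
          · exact G.loopless.irrefl _ h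
          · exact huv (by rw [← h1, h2])
          · exact huv (by rw [← h2, h1]) } with hHpdef
    have hHpadj : ∀ x y : ↥S, Hp.Adj x y ↔
        (G.Adj ↑x ↑y ∨ ((x : V) = u ∧ (y : V) = v) ∨ ((x : V) = v ∧ (y : V) = u)) := by
      intro x y; rw [hHpdef]
    have hsubA : ∀ x y : ↥S, G.Adj ↑x ↑y → Hp.Adj x y := by
      intro x y h; rw [hHpdef]; exact Or.inl h
    have hfake : Hp.Adj ⟨u, huS⟩ ⟨v, hvS⟩ := by
      rw [hHpdef]; exact Or.inr (Or.inl ⟨rfl, rfl⟩)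
    haveI instS : Fintype ↥S := (Set.toFinite S).fintype
    -- at least 3 vertices
    have hb₁uv := hBuv b₁ hb₁
    have h3S : 3 ≤ Fintype.card ↥S := by
      have hsub : ({⟨u, huS⟩, ⟨v, hvS⟩, ⟨b₁, hBS b₁ hb₁⟩} : Finset ↥S) ⊆ Finset.univ :=
        Finset.subset_univ _
      have hc3 : ({⟨u, huS⟩, ⟨v, hvS⟩, ⟨b₁, hBS b₁ hb₁⟩} : Finset ↥S).card = 3 := by
        rw [Finset.card_insert_of_notMem, Finset.card_insert_of_notMem,
          Finset.card_singleton]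
        · simp only [Finset.mem_singleton]
          intro h
          exact hb₁uv.2 (congrArg Subtype.val h).symm
        · simp only [Finset.mem_insert, Finset.mem_singleton]
          push_neg
          constructor
          · intro h; exact huv (congrArg Subtype.val h)
          · intro h; exact hb₁uv.1 (congrArg Subtype.val h).symm
      rw [← hc3, ← Finset.card_univ]
      exact Finset.card_le_card hsub
    -- reaching u or v inside Hp avoiding a B-vertex x
    have hreachB : ∀ (x : V), x ∈ B → ∀ (a : ↥S), (a : V) ≠ x →
        (∃ w : Hp.Walk a ⟨u, huS⟩, ∀ t ∈ w.support, (t : V) ≠ x) ∨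
        (∃ w : Hp.Walk a ⟨v, hvS⟩, ∀ t ∈ w.support, (t : V) ≠ x) := by
      intro x hxB a hax
      rcases hmemS a.1 a.2 with haB | hau | hav
      · -- a is in B
        have hvx : v ≠ x := fun h => (hBuv x hxB).2 h.symm
        obtain ⟨w, hw⟩ := hGd x (a : V) v hax hvx
        obtain ⟨f, hfF, hfP, _, w', hw1, hw2⟩ :=
          exit_lemma (P := B \ {x}) (F := {u, v, x}) w ⟨haB, hax⟩
            (fun h => (hBuv v h.1).2 rfl)
            (fun p hp y hy => by
              rcases hBcl p hp.1 y hy with h | h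
              · by_cases hyx : y = x
                · exact Or.inr (by simp [hyx])
                · exact Or.inl ⟨h, hyx⟩
              · simp only [Set.mem_insert_iff, Set.mem_singleton_iff] at h
                rcases h with h | h
                · exact Or.inr (by simp [h])
                · exact Or.inr (by simp [h]))
        have hfx : f ≠ x := fun h => hw (h ▸ hw2 f (Walk.end_mem_support w'))
        have hfuv : f = u ∨ f = v := by
          simp only [Set.mem_insert_iff, Set.mem_singleton_iff] at hfF
          rcases hfF with h | h | h
          · exact Or.inl h
          · exact Or.inr h
          · exact absurd h hfx
        have hwprop : ∀ (hfS : f ∈ S), ∃ w'' : Hp.Walk a ⟨f, hfS⟩,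
            ∀ t ∈ w''.support, (t : V) ≠ x := by
          intro hfS
          have hwsupS : ∀ z ∈ w'.support, z ∈ S := by
            intro z hz
            rcases hw1 z hz with h | h
            · exact h ▸ hfS
            · exact hBS z h.1
          obtain ⟨w'', hw''⟩ := walk_lift hsubA w' hwsupS a.2 hfS
          refine ⟨w'', ?_⟩
          intro t ht
          have htval : (t : V) ∈ w'.support := by
            rw [← hw'']
            exact List.mem_map_of_mem ht
          rcases hw1 _ htval with h | h
          · rw [h]; exact hfx
          · exact h.2
        rcases hfuv with rfl | rfl
        · exact Or.inl (hwprop huS)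
        · exact Or.inr (hwprop hvS)
      · have ha' : a = ⟨u, huS⟩ := Subtype.ext hau
        subst ha'
        refine Or.inl ⟨Walk.nil, ?_⟩
        intro t ht
        simp only [Walk.support_nil, List.mem_singleton] at ht
        rw [ht]
        exact fun h => (hBuv x hxB).1 h.symm
      · have ha' : a = ⟨v, hvS⟩ := Subtype.ext hav
        subst ha'
        refine Or.inr ⟨Walk.nil, ?_⟩
        intro t ht
        simp only [Walk.support_nil, List.mem_singleton] at ht
        rw [ht]
        exact fun h => (hBuv x hxB).2 h.symm
    -- reaching v avoiding u, and reaching u avoiding v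
    have hreachV : ∀ (a : ↥S), (a : V) ≠ u →
        ∃ w : Hp.Walk a ⟨v, hvS⟩, ∀ t ∈ w.support, (t : V) ≠ u := by
      intro a hau
      rcases hmemS a.1 a.2 with haB | hau' | hav
      · obtain ⟨w, hwsub, hwu⟩ := hwalkv (a : V) haB
        have hwsupS : ∀ z ∈ w.support, z ∈ S := by
          intro z hz
          rcases hwsub z hz with h | h
          · exact hBS z h
          · exact Or.inr (by simp at h; simp [h])
        obtain ⟨w', hw'⟩ := walk_lift hsubA w hwsupS a.2 hvS
        refine ⟨w', ?_⟩
        intro t ht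
        have htval : (t : V) ∈ w.support := by
          rw [← hw']
          exact List.mem_map_of_mem ht
        exact fun h => hwu (h ▸ htval)
      · exact absurd hau' hau
      · have ha' : a = ⟨v, hvS⟩ := Subtype.ext hav
        subst ha'
        refine ⟨Walk.nil, ?_⟩
        intro t ht
        simp only [Walk.support_nil, List.mem_singleton] at ht
        rw [ht]
        exact huv.symm
    have hreachU : ∀ (a : ↥S), (a : V) ≠ v →
        ∃ w : Hp.Walk a ⟨u, huS⟩, ∀ t ∈ w.support, (t : V) ≠ v := by
      intro a hav
      rcases hmemS a.1 a.2 with haB | hau | hav'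
      · obtain ⟨w, hwsub, hwv⟩ := hwalku (a : V) haB
        have hwsupS : ∀ z ∈ w.support, z ∈ S := by
          intro z hz
          rcases hwsub z hz with h | h
          · exact hBS z h
          · exact Or.inr (by simp at h; simp [h])
        obtain ⟨w', hw'⟩ := walk_lift hsubA w hwsupS a.2 huS
        refine ⟨w', ?_⟩
        intro t ht
        have htval : (t : V) ∈ w.support := by
          rw [← hw']
          exact List.mem_map_of_mem ht
        exact fun h => hwv (h ▸ htval)
      · have ha' : a = ⟨u, huS⟩ := Subtype.ext hau
        subst ha'
        refine ⟨Walk.nil, ?_⟩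
        intro t ht
        simp only [Walk.support_nil, List.mem_singleton] at ht
        rw [ht]
        exact huv
      · exact absurd hav' hav
    -- composition with a middle edge
    have havoid3 : ∀ {a b e1 e2 : ↥S} (w1 : Hp.Walk a e1) (w2 : Hp.Walk b e2)
        (he : Hp.Adj e1 e2) (x : ↥S), (∀ t ∈ w1.support, t ≠ x) →
        (∀ t ∈ w2.support, t ≠ x) → ∃ w : Hp.Walk a b, x ∉ w.support := by
      intro a b e1 e2 w1 w2 he x h1 h2
      refine ⟨w1.append (Walk.cons he w2.reverse), ?_⟩
      rw [Walk.support_append, List.mem_append]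
      rintro (h | h)
      · exact h1 x h rfl
      · rw [Walk.support_cons, List.tail_cons, Walk.support_reverse, List.mem_reverse] at h
        exact h2 x h rfl
    -- deletion-connectivity of Hp
    have hdelp : ∀ (x a b : ↥S), a ≠ x → b ≠ x → ∃ w : Hp.Walk a b, x ∉ w.support := by
      intro x a b hax hbx
      have hax' : (a : V) ≠ ↑x := fun h => hax (Subtype.ext h)
      have hbx' : (b : V) ≠ ↑x := fun h => hbx (Subtype.ext h)
      rcases hmemS x.1 x.2 with hxB | hxu | hxv
      · have hc1 := hreachB ↑x hxB a hax'
        have hc2 := hreachB ↑x hxB b hbx'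
        rcases hc1 with ⟨w1, hs1⟩ | ⟨w1, hs1⟩ <;> rcases hc2 with ⟨w2, hs2⟩ | ⟨w2, hs2⟩
        · exact havoid2 w1 w2 (fun h => hs1 x h rfl) (fun h => hs2 x h rfl)
        · exact havoid3 w1 w2 hfake x (fun t ht h => hs1 t ht (congrArg Subtype.val h))
            (fun t ht h => hs2 t ht (congrArg Subtype.val h))
        · exact havoid3 w1 w2 hfake.symm x (fun t ht h => hs1 t ht (congrArg Subtype.val h))
            (fun t ht h => hs2 t ht (congrArg Subtype.val h))
        · exact havoid2 w1 w2 (fun h => hs1 x h rfl) (fun h => hs2 x h rfl)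
      · -- x = u
        have haxu : (a : V) ≠ u := hxu ▸ hax'
        have hbxu : (b : V) ≠ u := hxu ▸ hbx'
        obtain ⟨w1, hs1⟩ := hreachV a haxu
        obtain ⟨w2, hs2⟩ := hreachV b hbxu
        exact havoid2 w1 w2 (fun h => hs1 x h hxu) (fun h => hs2 x h hxu)
      · -- x = v
        have haxv : (a : V) ≠ v := hxv ▸ hax'
        have hbxv : (b : V) ≠ v := hxv ▸ hbx'
        obtain ⟨w1, hs1⟩ := hreachU a haxv
        obtain ⟨w2, hs2⟩ := hreachU b hbxv
        exact havoid2 w1 w2 (fun h => hs1 x h hxv) (fun h => hs2 x h hxv)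
    -- connectivity of Hp
    have hconnS : Hp.Connected := by
      rw [connected_iff]
      refine ⟨?_, ⟨⟨u, huS⟩⟩⟩
      intro a b
      obtain ⟨xx, hx1, hx2⟩ := exists_third h3S a b
      obtain ⟨w, _⟩ := hdelp xx a b (Ne.symm hx1) (Ne.symm hx2)
      exact ⟨w⟩
    have hdeg_ncard : ∀ t : V, (G.neighborSet t).ncard = G.degree t := by
      intro t
      rw [← G.card_neighborSet_eq_degree t, Set.ncard_eq_toFinset_card', Set.toFinset_card]
    have hdegS : ∀ w : ↥S, w ≠ ⟨u, huS⟩ → w ≠ ⟨v, hvS⟩ → δ ≤ (Hp.neighborSet w).ncard := by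
      intro t htu htv
      have htu' : (t : V) ≠ u := fun h => htu (Subtype.ext h)
      have htv' : (t : V) ≠ v := fun h => htv (Subtype.ext h)
      have htB : (t : V) ∈ B := by
        rcases hmemS t.1 t.2 with h | h | h
        · exact h
        · exact absurd h htu'
        · exact absurd h htv'
      have hd := hdeg (t : V) htu' htv'
      rw [← hdeg_ncard] at hd
      have himg : G.neighborSet (t : V) ⊆ Subtype.val '' (Hp.neighborSet t) := by
        intro y hy
        have hyS : y ∈ S := by
          rcases hBcl (t : V) htB y hy with h | h
          · exact Or.inl h
          · exact Or.inr h
        exact ⟨⟨y, hyS⟩, hsubA t ⟨y, hyS⟩ hy, rfl⟩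
      calc δ ≤ (G.neighborSet (t : V)).ncard := hd
        _ ≤ (Subtype.val '' (Hp.neighborSet t)).ncard :=
            Set.ncard_le_ncard himg (Set.toFinite _)
        _ = (Hp.neighborSet t).ncard := Set.ncard_image_of_injective _ Subtype.val_injective
    -- apply the main theorem
    have huvS : (⟨u, huS⟩ : ↥S) ≠ ⟨v, hvS⟩ := fun h => huv (congrArg Subtype.val h)
    obtain ⟨PP, hPPpath, hPPlen⟩ := long_path (Fintype.card ↥S) ↥S Hp rfl h3S hconnS hdelp
      ⟨u, huS⟩ ⟨v, hvS⟩ huvS δ hdegS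
    -- PP does not use the artificial edge
    have hnofake : s((⟨u, huS⟩ : ↥S), (⟨v, hvS⟩ : ↥S)) ∉ PP.edges := by
      intro hmem
      have := path_edge_endpoints PP hPPpath hmem
      omega
    have hE : ∀ x y : ↥S, s(x, y) ∈ PP.edges → G.Adj ↑x ↑y := by
      intro x y hxy
      have hadj : Hp.Adj x y := (Hp.mem_edgeSet).1 (PP.edges_subset_edgeSet hxy)
      rw [hHpadj] at hadj
      rcases hadj with h | ⟨h1, h2⟩ | ⟨h1, h2⟩
      · exact h
      · exfalso
        apply hnofake
        have hx : x = ⟨u, huS⟩ := Subtype.ext h1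
        have hy : y = ⟨v, hvS⟩ := Subtype.ext h2
        have heq : s(x, y) = s((⟨u, huS⟩ : ↥S), (⟨v, hvS⟩ : ↥S)) := by rw [hx, hy]
        exact heq ▸ hxy
      · exfalso
        apply hnofake
        have hx : x = ⟨v, hvS⟩ := Subtype.ext h1
        have hy : y = ⟨u, huS⟩ := Subtype.ext h2
        have heq : s(x, y) = s((⟨u, huS⟩ : ↥S), (⟨v, hvS⟩ : ↥S)) := by
          rw [hx, hy, Sym2.eq_swap]
        exact heq ▸ hxy
    obtain ⟨PG, hlen, hsup⟩ := walk_down_cond PP hE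
    refine ⟨PG, ?_, ?_, ?_⟩
    · rw [Walk.isPath_def, hsup]
      exact hPPpath.support_nodup.map Subtype.val_injective
    · omega
    · intro a ha hmem
      rw [hsup] at hmem
      obtain ⟨t, _, rfl⟩ := List.mem_map.1 hmem
      rcases hmemS t.1 t.2 with h | h | h
      · exact hdisj.le_bot ⟨ha, h⟩
      · exact (hAuv _ ha).1 h
      · exact (hAuv _ ha).2 h
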